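/- Let γ ≠ 0, 0 < κ ≤ 1 and t0 > 0, and consider the equation x''(t) + x(t) = γ·t^{−κ}·x'(t) for t ≥ t0. If γ < 0, then every twice-differentiable solution x : [t0,∞) → ℝ satisfies x(t) → 0 and x'(t) → 0 as t → ∞ (the equilibrium is asymptotically stable). If γ > 0, then every solution with (x(t0),x'(t0)) ≠ (0,0) satisfies x(t)² + x'(t)² → ∞ as t → ∞ (the equilibrium is unstable). -/

import Mathlib

open Real Filter Set

private lemma mono_aux {f f' : ℝ → ℝ} {T : ℝ}
    (hf : ∀ t ∈ Ici T, HasDerivAt f (f' t) t)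
    (h0 : ∀ t ∈ Ioi T, 0 ≤ f' t) : MonotoneOn f (Ici T) := by
  apply monotoneOn_of_deriv_nonneg (convex_Ici T)
  · exact fun t ht => (hf t ht).continuousAt.continuousWithinAt
  · intro t ht
    rw [interior_Ici] at ht
    exact (hf t (mem_Ici.mpr (mem_Ioi.mp ht).le)).differentiableAt.differentiableWithinAt
  · intro t ht
    rw [interior_Ici] at ht
    rw [(hf t (mem_Ici.mpr (mem_Ioi.mp ht).le)).deriv]
    exact h0 t ht

private lemma anti_aux {f f' : ℝ → ℝ} {T : ℝ}
    (hf : ∀ t ∈ Ici T, HasDerivAt f (f' t) t)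
    (h0 : ∀ t ∈ Ioi T, f' t ≤ 0) : AntitoneOn f (Ici T) := by
  apply antitoneOn_of_deriv_nonpos (convex_Ici T)
  · exact fun t ht => (hf t ht).continuousAt.continuousWithinAt
  · intro t ht
    rw [interior_Ici] at ht
    exact (hf t (mem_Ici.mpr (mem_Ioi.mp ht).le)).differentiableAt.differentiableWithinAt
  · intro t ht
    rw [interior_Ici] at ht
    rw [(hf t (mem_Ici.mpr (mem_Ioi.mp ht).le)).deriv]
    exact h0 t ht

private lemma antider {κ : ℝ} (hκ0 : 0 < κ) (hκ1 : κ ≤ 1) :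
    ∃ P : ℝ → ℝ, (∀ t : ℝ, 0 < t → HasDerivAt P (t ^ (-κ)) t) ∧
      Tendsto P atTop atTop := by
  rcases eq_or_lt_of_le hκ1 with h1 | h1
  · refine ⟨Real.log, fun t ht => ?_, Real.tendsto_log_atTop⟩
    have := Real.hasDerivAt_log (ne_of_gt ht)
    rw [show -κ = -1 by rw [← h1], Real.rpow_neg_one]
    exact this
  · refine ⟨fun t => t ^ (1 - κ) / (1 - κ), fun t ht => ?_, ?_⟩
    · have h := (Real.hasDerivAt_rpow_const (p := 1 - κ) (Or.inl (ne_of_gt ht))).div_const (1 - κ)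
      have he : (1 - κ) * t ^ (1 - κ - 1) / (1 - κ) = t ^ (-κ) := by
        rw [show (1 - κ - 1) = -κ by ring, mul_comm, mul_div_assoc,
          div_self (by linarith : (1:ℝ) - κ ≠ 0), mul_one]
      rwa [he] at h
    · exact (tendsto_rpow_atTop (by linarith)).atTop_div_const (by linarith)


private lemma tend_zero (K c : ℝ) (hc : c < 0) (P : ℝ → ℝ)
    (hPtop : Filter.Tendsto P Filter.atTop Filter.atTop) :
    Filter.Tendsto (fun s => K * Real.exp (c * P s)) Filter.atTop (nhds 0) := by
  have h1 : Filter.Tendsto (fun s => c * P s) Filter.atTop Filter.atBot := by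
    have h2 := Filter.tendsto_neg_atTop_atBot.comp
      (hPtop.const_mul_atTop (neg_pos.mpr hc))
    have he : (fun s => c * P s) = (Neg.neg ∘ fun s => -c * P s) := by
      funext s; simp [Function.comp]
    rw [he]; exact h2
  have h2 : Filter.Tendsto (fun s => Real.exp (c * P s)) Filter.atTop (nhds 0) :=
    Real.tendsto_exp_atBot.comp h1
  simpa using h2.const_mul K

private lemma tend_top (K c : ℝ) (hK : 0 < K) (hc : 0 < c) (P : ℝ → ℝ)
    (hPtop : Filter.Tendsto P Filter.atTop Filter.atTop) :
    Filter.Tendsto (fun s => K * Real.exp (c * P s)) Filter.atTop Filter.atTop := by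
  have h1 : Filter.Tendsto (fun s => Real.exp (c * P s)) Filter.atTop Filter.atTop :=
    Real.tendsto_exp_atTop.comp (hPtop.const_mul_atTop hc)
  exact h1.const_mul_atTop hK

private lemma key (γ κ t0 : ℝ) (hγ : γ ≠ 0) (hκ0 : 0 < κ) (hκ1 : κ ≤ 1) (ht0 : 0 < t0)
    (x : ℝ → ℝ)
    (hx : ∀ t ≥ t0, HasDerivAt x (deriv x t) t)
    (hxx : ∀ t ≥ t0, HasDerivAt (deriv x) (γ * t ^ (-κ) * deriv x t - x t) t)
    (P : ℝ → ℝ) (hP : ∀ t : ℝ, 0 < t → HasDerivAt P (t ^ (-κ)) t)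
    (hPtop : Filter.Tendsto P Filter.atTop Filter.atTop) :
    ∃ g : ℝ → ℝ, ∃ T : ℝ,
      (γ < 0 → Tendsto g atTop (nhds 0) ∧
        ∀ t ≥ T, (x t) ^ 2 + (deriv x t) ^ 2 ≤ g t) ∧
      (0 < γ → (x t0, deriv x t0) ≠ (0, 0) →
        Tendsto g atTop atTop ∧ ∀ t ≥ T, g t ≤ (x t) ^ 2 + (deriv x t) ^ 2) := by
  classical
  set E : ℝ → ℝ := fun t => (x t) ^ 2 + (deriv x t) ^ 2 with hEdef
  set V : ℝ → ℝ := fun t => E t - γ * t ^ (-κ) * (x t * deriv x t) with hVdef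
  set T : ℝ := max (max t0 4) ((4 * |γ|) ^ κ⁻¹) with hTdef
  have hγpos : 0 < |γ| := abs_pos.mpr hγ
  have hTt0 : t0 ≤ T := le_trans (le_max_left _ _) (le_max_left _ _)
  have hT4 : (4:ℝ) ≤ T := le_trans (le_max_right t0 4) (le_max_left _ _)
  -- derivative of E, valid for all t ≥ t0
  have hE' : ∀ t, t0 ≤ t → HasDerivAt E (2 * γ * t ^ (-κ) * (deriv x t) ^ 2) t := by
    intro t ht
    have h := ((hx t ht).fun_pow 2).fun_add ((hxx t ht).fun_pow 2)
    refine h.congr_deriv ?_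
    push_cast
    ring
  -- amplitude bound
  have hA : ∀ t, T ≤ t → |γ| * t ^ (-κ) ≤ 1/4 := by
    intro t ht
    have hpos : 0 < t := lt_of_lt_of_le (by norm_num) (le_trans hT4 ht)
    have h1 : (4 * |γ|) ^ κ⁻¹ ≤ t := le_trans (le_max_right (max t0 4) _) ht
    have h2 : 4 * |γ| ≤ t ^ κ := by
      calc 4 * |γ| = ((4 * |γ|) ^ κ⁻¹) ^ κ :=
            (Real.rpow_inv_rpow (by positivity) (ne_of_gt hκ0)).symm
        _ ≤ t ^ κ := Real.rpow_le_rpow (by positivity) h1 (le_of_lt hκ0)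
    have h3 : t ^ (-κ) = (t ^ κ)⁻¹ := Real.rpow_neg hpos.le κ
    rw [h3]
    have h5 : (t ^ κ)⁻¹ ≤ (4 * |γ|)⁻¹ := inv_anti₀ (by positivity) h2
    calc |γ| * (t ^ κ)⁻¹ ≤ |γ| * (4 * |γ|)⁻¹ :=
          mul_le_mul_of_nonneg_left h5 (abs_nonneg γ)
      _ = 1/4 := by field_simp
  -- derivative of V for t ≥ T
  have hV' : ∀ t, T ≤ t → HasDerivAt V
      (γ * t ^ (-κ) * E t +
        (γ * κ * t ^ (-κ - 1) - γ ^ 2 * (t ^ (-κ)) ^ 2) * (x t * deriv x t)) t := by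
    intro t ht
    have hpos : 0 < t := lt_of_lt_of_le (by norm_num) (le_trans hT4 ht)
    have ht0t : t0 ≤ t := le_trans hTt0 ht
    have hrp : HasDerivAt (fun s : ℝ => s ^ (-κ)) (-κ * t ^ (-κ - 1)) t :=
      Real.hasDerivAt_rpow_const (Or.inl hpos.ne')
    have h := (hE' t ht0t).fun_sub (((hrp.const_mul γ).fun_mul ((hx t ht0t).fun_mul (hxx t ht0t))))
    refine h.congr_deriv ?_
    simp only [hEdef]
    ring
  -- pointwise bounds for t ≥ T
  have hbnd : ∀ t, T ≤ t →
      7/8 * E t ≤ V t ∧ V t ≤ 9/8 * E t ∧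
      |(γ * κ * t ^ (-κ - 1) - γ ^ 2 * (t ^ (-κ)) ^ 2) * (x t * deriv x t)|
        ≤ |γ|/4 * t ^ (-κ) * E t := by
    intro t ht
    have hpos : 0 < t := lt_of_lt_of_le (by norm_num) (le_trans hT4 ht)
    have h4t : (4:ℝ) ≤ t := le_trans hT4 ht
    have hrpnn : 0 ≤ t ^ (-κ) := Real.rpow_nonneg hpos.le _
    have hEnn : 0 ≤ E t := by positivity
    have huv : |x t * deriv x t| ≤ E t / 2 := by
      rw [abs_le]
      constructor <;> simp only [hEdef] <;>
        nlinarith [sq_nonneg (x t - deriv x t), sq_nonneg (x t + deriv x t)]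
    have hAt := hA t ht
    have hcorr : |γ * t ^ (-κ) * (x t * deriv x t)| ≤ E t / 8 := by
      calc |γ * t ^ (-κ) * (x t * deriv x t)| = |γ| * t ^ (-κ) * |x t * deriv x t| := by
            rw [abs_mul, abs_mul, abs_of_nonneg hrpnn]
        _ ≤ (1/4) * (E t / 2) :=
            mul_le_mul hAt huv (abs_nonneg _) (by norm_num)
        _ = E t / 8 := by ring
    have hVE := abs_le.mp hcorr
    have ht1 : t ^ (-κ - 1) = t ^ (-κ) / t := by
      rw [Real.rpow_sub hpos, Real.rpow_one]
    have hb1 : |γ * κ * t ^ (-κ - 1)| ≤ |γ|/4 * t ^ (-κ) := by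
      have e0 : |γ * κ * t ^ (-κ - 1)| = |γ| * κ * (t ^ (-κ) / t) := by
        rw [ht1, abs_mul, abs_mul, abs_of_nonneg hκ0.le,
          abs_of_nonneg (by positivity : (0:ℝ) ≤ t ^ (-κ) / t)]
      rw [e0]
      have e1 : t ^ (-κ) / t ≤ t ^ (-κ) / 4 := by gcongr <;> norm_num
      calc |γ| * κ * (t ^ (-κ) / t) ≤ |γ| * 1 * (t ^ (-κ) / 4) := by
            apply mul_le_mul _ e1 (by positivity) (by positivity)
            exact mul_le_mul_of_nonneg_left hκ1 (abs_nonneg γ)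
        _ = |γ|/4 * t ^ (-κ) := by ring
    have hb2 : γ ^ 2 * (t ^ (-κ)) ^ 2 ≤ |γ|/4 * t ^ (-κ) := by
      nlinarith [sq_abs γ, mul_nonneg (abs_nonneg γ) hrpnn]
    have hrb : |γ * κ * t ^ (-κ - 1) - γ ^ 2 * (t ^ (-κ)) ^ 2| ≤ |γ|/2 * t ^ (-κ) := by
      have := abs_sub (γ * κ * t ^ (-κ - 1)) (γ ^ 2 * (t ^ (-κ)) ^ 2)
      have e2 : |γ ^ 2 * (t ^ (-κ)) ^ 2| = γ ^ 2 * (t ^ (-κ)) ^ 2 :=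
        abs_of_nonneg (by positivity)
      calc |γ * κ * t ^ (-κ - 1) - γ ^ 2 * (t ^ (-κ)) ^ 2|
          ≤ |γ * κ * t ^ (-κ - 1)| + |γ ^ 2 * (t ^ (-κ)) ^ 2| := abs_sub _ _
        _ ≤ |γ|/4 * t ^ (-κ) + |γ|/4 * t ^ (-κ) := by rw [e2]; exact add_le_add hb1 hb2
        _ = |γ|/2 * t ^ (-κ) := by ring
    refine ⟨by simp only [hVdef]; linarith [hVE.1, hVE.2],
            by simp only [hVdef]; linarith [hVE.1, hVE.2], ?_⟩
    calc |(γ * κ * t ^ (-κ - 1) - γ ^ 2 * (t ^ (-κ)) ^ 2) * (x t * deriv x t)|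
        = |γ * κ * t ^ (-κ - 1) - γ ^ 2 * (t ^ (-κ)) ^ 2| * |x t * deriv x t| := abs_mul _ _
      _ ≤ (|γ|/2 * t ^ (-κ)) * (E t / 2) :=
          mul_le_mul hrb huv (abs_nonneg _) (by positivity)
      _ = |γ|/4 * t ^ (-κ) * E t := by ring
  -- the weighted energy W
  set W : ℝ → ℝ := fun s => V s * Real.exp (-(2 * γ / 3) * P s) with hWdef
  have hW' : ∀ t ∈ Ici T, HasDerivAt W
      ((γ * t ^ (-κ) * E t +
        (γ * κ * t ^ (-κ - 1) - γ ^ 2 * (t ^ (-κ)) ^ 2) * (x t * deriv x t)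
        - 2 * γ / 3 * t ^ (-κ) * V t) * Real.exp (-(2 * γ / 3) * P t)) t := by
    intro t ht
    have hpos : 0 < t := lt_of_lt_of_le (by norm_num) (le_trans hT4 ht)
    have hexp : HasDerivAt (fun s => Real.exp (-(2 * γ / 3) * P s))
        (Real.exp (-(2 * γ / 3) * P t) * (-(2 * γ / 3) * t ^ (-κ))) t :=
      ((hP t hpos).const_mul (-(2 * γ / 3))).exp
    have h := (hV' t ht).fun_mul hexp
    refine h.congr_deriv ?_
    ring
  have hrpnn' : ∀ t : ℝ, T ≤ t → 0 ≤ t ^ (-κ) := fun t ht =>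
    Real.rpow_nonneg (lt_of_lt_of_le (by norm_num : (0:ℝ) < 4) (le_trans hT4 ht)).le _
  rcases hγ.lt_or_gt with hneg | hpos
  · -- γ < 0 : W is antitone
    have habs : |γ| = -γ := abs_of_neg hneg
    have hanti : AntitoneOn W (Ici T) := by
      apply anti_aux hW'
      intro t ht
      have ht' : T ≤ t := le_of_lt ht
      obtain ⟨hV7, hV9, hruv⟩ := hbnd t ht'
      have hrpnn := hrpnn' t ht'
      have hEnn : 0 ≤ E t := by positivity
      apply mul_nonpos_iff.mpr
      refine Or.inr ⟨?_, (Real.exp_pos _).le⟩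
      have hruv' : (γ * κ * t ^ (-κ - 1) - γ ^ 2 * (t ^ (-κ)) ^ 2) * (x t * deriv x t)
          ≤ -γ/4 * t ^ (-κ) * E t := by
        have := le_abs_self ((γ * κ * t ^ (-κ - 1) - γ ^ 2 * (t ^ (-κ)) ^ 2) * (x t * deriv x t))
        rw [habs] at hruv
        linarith
      have hcn : 2 * γ / 3 * t ^ (-κ) ≤ 0 := by
        apply mul_nonpos_iff.mpr
        exact Or.inr ⟨by linarith, hrpnn⟩
      have h9 : 2 * γ / 3 * t ^ (-κ) * (9/8 * E t) ≤ 2 * γ / 3 * t ^ (-κ) * V t :=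
        mul_le_mul_of_nonpos_left hV9 hcn
      linarith
    refine ⟨fun s => 8/7 * W T * Real.exp (2 * γ / 3 * P s), T,
      fun _ => ⟨?_, ?_⟩, fun hp => absurd hneg (lt_asymm hp)⟩
    · -- tendsto 0
      exact tend_zero (8/7 * W T) (2 * γ / 3) (by linarith) P hPtop
    · -- bound
      intro t ht
      obtain ⟨hV7, hV9, _⟩ := hbnd t ht
      have hWle : W t ≤ W T := hanti (mem_Ici.mpr le_rfl) (mem_Ici.mpr ht) ht
      have he : V t * Real.exp (-(2 * γ / 3) * P t) * Real.exp (2 * γ / 3 * P t) = V t := by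
        rw [mul_assoc, ← Real.exp_add, show -(2 * γ / 3) * P t + 2 * γ / 3 * P t = 0 by ring,
          Real.exp_zero, mul_one]
      have hVle : V t ≤ W T * Real.exp (2 * γ / 3 * P t) := by
        calc V t = V t * Real.exp (-(2 * γ / 3) * P t) * Real.exp (2 * γ / 3 * P t) := he.symm
          _ ≤ W T * Real.exp (2 * γ / 3 * P t) :=
            mul_le_mul_of_nonneg_right hWle (Real.exp_pos _).le
      show E t ≤ 8/7 * W T * Real.exp (2 * γ / 3 * P t)
      linarith
  · -- 0 < γ : W is monotone
    have habs : |γ| = γ := abs_of_pos hpos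
    have hmono : MonotoneOn W (Ici T) := by
      apply mono_aux hW'
      intro t ht
      have ht' : T ≤ t := le_of_lt ht
      obtain ⟨hV7, hV9, hruv⟩ := hbnd t ht'
      have hrpnn := hrpnn' t ht'
      have hEnn : 0 ≤ E t := by positivity
      apply mul_nonneg _ (Real.exp_pos _).le
      have hruv' : -(γ/4 * t ^ (-κ) * E t)
          ≤ (γ * κ * t ^ (-κ - 1) - γ ^ 2 * (t ^ (-κ)) ^ 2) * (x t * deriv x t) := by
        rw [habs] at hruv
        have := (abs_le.mp hruv).1
        linarith
      have hcp : 0 ≤ 2 * γ / 3 * t ^ (-κ) := mul_nonneg (by linarith) hrpnn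
      have h9 : 2 * γ / 3 * t ^ (-κ) * V t ≤ 2 * γ / 3 * t ^ (-κ) * (9/8 * E t) :=
        mul_le_mul_of_nonneg_left hV9 hcp
      linarith
    have hEmono : MonotoneOn E (Ici t0) := by
      apply mono_aux (fun t ht => hE' t ht)
      intro t ht
      have hpos : 0 < t := lt_trans ht0 ht
      have h1 : 0 ≤ t ^ (-κ) := Real.rpow_nonneg hpos.le _
      exact mul_nonneg (mul_nonneg (by linarith) h1) (sq_nonneg _)
    refine ⟨fun s => 8/9 * W T * Real.exp (2 * γ / 3 * P s), T,
      fun hn => absurd hn (lt_asymm hpos), fun _ hne => ⟨?_, ?_⟩⟩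
    · -- tendsto atTop
      have hET0 : 0 < E t0 := by
        have hx0 : x t0 ≠ 0 ∨ deriv x t0 ≠ 0 := by
          by_contra h
          push_neg at h
          exact hne (by rw [h.1, h.2])
        simp only [hEdef]
        rcases hx0 with h | h
        · have h1 := sq_pos_of_ne_zero h
          have h2 := sq_nonneg (deriv x t0)
          linarith
        · have h1 := sq_pos_of_ne_zero h
          have h2 := sq_nonneg (x t0)
          linarith
      have hETT : E t0 ≤ E T := hEmono (mem_Ici.mpr le_rfl) (mem_Ici.mpr hTt0) hTt0
      obtain ⟨hV7T, -, -⟩ := hbnd T le_rfl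
      have hVT : 0 < V T :=
        lt_of_lt_of_le (lt_of_lt_of_le (mul_pos (by norm_num : (0:ℝ) < 7/8) hET0) (mul_le_mul_of_nonneg_left hETT
          (by norm_num : (0:ℝ) ≤ 7/8))) hV7T
      have hWT : 0 < W T := mul_pos hVT (Real.exp_pos _)
      exact tend_top _ _ (by linarith) (by linarith) P hPtop
    · -- lower bound
      intro t ht
      obtain ⟨hV7, hV9, -⟩ := hbnd t ht
      have hWge : W T ≤ W t := hmono (mem_Ici.mpr le_rfl) (mem_Ici.mpr ht) ht
      have he : V t * Real.exp (-(2 * γ / 3) * P t) * Real.exp (2 * γ / 3 * P t) = V t := by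
        rw [mul_assoc, ← Real.exp_add, show -(2 * γ / 3) * P t + 2 * γ / 3 * P t = 0 by ring,
          Real.exp_zero, mul_one]
      have hVge : W T * Real.exp (2 * γ / 3 * P t) ≤ V t := by
        calc W T * Real.exp (2 * γ / 3 * P t)
            ≤ W t * Real.exp (2 * γ / 3 * P t) :=
              mul_le_mul_of_nonneg_right hWge (Real.exp_pos _).le
          _ = V t := he
      show 8/9 * W T * Real.exp (2 * γ / 3 * P t) ≤ E t
      linarith


/-- for the oscillator `x'' + x = γ t^{−κ} x'` with `0 < κ ≤ 1`:
if `γ < 0` every solution tends to the equilibrium `(0,0)`, while if `γ > 0`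
every nontrivial solution satisfies `x(t)² + x'(t)² → ∞`. -/
theorem decaying_damping_oscillator
    (γ κ t0 : ℝ) (hγ : γ ≠ 0) (hκ0 : 0 < κ) (hκ1 : κ ≤ 1) (ht0 : 0 < t0) :
    (γ < 0 → ∀ x : ℝ → ℝ,
      (∀ t ≥ t0, HasDerivAt x (deriv x t) t) →
      (∀ t ≥ t0, HasDerivAt (deriv x) (γ * t ^ (-κ) * deriv x t - x t) t) →
      Filter.Tendsto x Filter.atTop (nhds 0) ∧
      Filter.Tendsto (deriv x) Filter.atTop (nhds 0)) ∧
    (0 < γ → ∀ x : ℝ → ℝ,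
      (∀ t ≥ t0, HasDerivAt x (deriv x t) t) →
      (∀ t ≥ t0, HasDerivAt (deriv x) (γ * t ^ (-κ) * deriv x t - x t) t) →
      (x t0, deriv x t0) ≠ (0, 0) →
      Filter.Tendsto (fun t => (x t) ^ 2 + (deriv x t) ^ 2) Filter.atTop
        Filter.atTop) := by
  obtain ⟨P, hP, hPtop⟩ := antider hκ0 hκ1
  constructor
  · intro hneg x hx hxx
    obtain ⟨g, T, h1, -⟩ := key γ κ t0 hγ hκ0 hκ1 ht0 x hx hxx P hP hPtop
    obtain ⟨hg0, hle⟩ := h1 hneg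
    have hE0 : Filter.Tendsto (fun t => (x t) ^ 2 + (deriv x t) ^ 2)
        Filter.atTop (nhds 0) := by
      apply tendsto_of_tendsto_of_tendsto_of_le_of_le' tendsto_const_nhds hg0
      · exact Filter.Eventually.of_forall (fun t => by positivity)
      · exact Filter.eventually_atTop.mpr ⟨T, hle⟩
    have hs : Filter.Tendsto (fun t => Real.sqrt ((x t) ^ 2 + (deriv x t) ^ 2))
        Filter.atTop (nhds 0) := by
      have := (Real.continuous_sqrt.tendsto 0).comp hE0
      simpa [Function.comp_def] using this
    constructor
    · rw [tendsto_zero_iff_abs_tendsto_zero]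
      apply tendsto_of_tendsto_of_tendsto_of_le_of_le' tendsto_const_nhds hs
      · exact Filter.Eventually.of_forall (fun t => abs_nonneg _)
      · refine Filter.Eventually.of_forall (fun t => ?_)
        show |x t| ≤ _
        rw [← Real.sqrt_sq_eq_abs]
        exact Real.sqrt_le_sqrt (by nlinarith [sq_nonneg (deriv x t)])
    · rw [tendsto_zero_iff_abs_tendsto_zero]
      apply tendsto_of_tendsto_of_tendsto_of_le_of_le' tendsto_const_nhds hs
      · exact Filter.Eventually.of_forall (fun t => abs_nonneg _)
      · refine Filter.Eventually.of_forall (fun t => ?_)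
        show |deriv x t| ≤ _
        rw [← Real.sqrt_sq_eq_abs]
        exact Real.sqrt_le_sqrt (by nlinarith [sq_nonneg (x t)])
  · intro hpos x hx hxx hne
    obtain ⟨g, T, -, h2⟩ := key γ κ t0 hγ hκ0 hκ1 ht0 x hx hxx P hP hPtop
    obtain ⟨hgt, hge⟩ := h2 hpos hne
    exact tendsto_atTop_mono' Filter.atTop (Filter.eventually_atTop.mpr ⟨T, hge⟩) hgt
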